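/- Let C be a bounded chain complex of finite-dimensional vector spaces over ℤ/2 and suppose the differential d_{p+1} : C_{p+1} → C_p is nonzero for some degree p. Then there exists a bounded chain complex C' of finite-dimensional ℤ/2-vector spaces and a chain homotopy equivalence between C and C' such that dim C'_{p+1} = dim C_{p+1} − 1, dim C'_p = dim C_p − 1, and C'_i is isomorphic to C_i for all i ∉ {p, p+1}. (A single algebraic Morse matching, in the sense of Kozlov, removes one matched pair of basis elements while preserving the chain homotopy type.) -/

import Mathlib

open CategoryTheory

namespace SingleMorse

lemma zero_hom_apply {M N : ModuleCat (ZMod 2)} (x : M) : (0 : M ⟶ N) x = 0 := rfl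

lemma d_d_apply (C : ChainComplex (ModuleCat (ZMod 2)) ℤ) (i j k : ℤ) (x : C.X i) :
    (C.d j k) ((C.d i j) x) = 0 := by
  have h := C.d_comp_d i j k
  calc (C.d j k) ((C.d i j) x) = (C.d i j ≫ C.d j k) x := rfl
    _ = (0 : C.X i ⟶ C.X k) x := by rw [h]
    _ = 0 := rfl

/-- The degreewise functional cutting out the subcomplex. -/
noncomputable def g (C : ChainComplex (ModuleCat (ZMod 2)) ℤ) (p : ℤ)
    (f : C.X p →ₗ[ZMod 2] ZMod 2) (i : ℤ) : C.X i →ₗ[ZMod 2] ZMod 2 :=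
  if h : p = i then (by subst h; exact f)
  else if h' : p + 1 = i then
    (by subst h'; exact f ∘ₗ (C.d (p + 1) p).hom)
  else 0

lemma g_p (C : ChainComplex (ModuleCat (ZMod 2)) ℤ) (p : ℤ)
    (f : C.X p →ₗ[ZMod 2] ZMod 2) : g C p f p = f := by
  rw [g, dif_pos rfl]

lemma g_p1 (C : ChainComplex (ModuleCat (ZMod 2)) ℤ) (p : ℤ)
    (f : C.X p →ₗ[ZMod 2] ZMod 2) :
    g C p f (p + 1) = f ∘ₗ (C.d (p + 1) p).hom := by
  rw [g, dif_neg (by omega), dif_pos rfl]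

lemma g_other (C : ChainComplex (ModuleCat (ZMod 2)) ℤ) (p : ℤ)
    (f : C.X p →ₗ[ZMod 2] ZMod 2) {i : ℤ} (h1 : p ≠ i) (h2 : p + 1 ≠ i) :
    g C p f i = 0 := by
  rw [g, dif_neg h1, dif_neg h2]

/-- The subspace in each degree. -/
noncomputable def S (C : ChainComplex (ModuleCat (ZMod 2)) ℤ) (p : ℤ)
    (f : C.X p →ₗ[ZMod 2] ZMod 2) (i : ℤ) : Submodule (ZMod 2) (C.X i) :=
  LinearMap.ker (g C p f i)

lemma d_mem (C : ChainComplex (ModuleCat (ZMod 2)) ℤ) (p : ℤ)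
    (f : C.X p →ₗ[ZMod 2] ZMod 2) {i j : ℤ} {x : C.X i} (hx : x ∈ S C p f i) :
    (C.d i j) x ∈ S C p f j := by
  unfold S at *
  rw [LinearMap.mem_ker] at *
  by_cases hj : p = j
  · subst hj
    rw [g_p]
    by_cases hi : p + 1 = i
    · subst hi
      rw [g_p1] at hx
      exact hx
    · rw [C.shape i p (show ¬ (p + 1 = i) from fun h => hi h), zero_hom_apply, map_zero]
  · by_cases hj' : p + 1 = j
    · subst hj'
      rw [g_p1, LinearMap.comp_apply, d_d_apply, map_zero]
    · rw [g_other C p f hj hj']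
      rfl

/-- The smaller chain complex. -/
noncomputable def C' (C : ChainComplex (ModuleCat (ZMod 2)) ℤ) (p : ℤ)
    (f : C.X p →ₗ[ZMod 2] ZMod 2) : ChainComplex (ModuleCat (ZMod 2)) ℤ where
  X i := ModuleCat.of (ZMod 2) (S C p f i)
  d i j := ModuleCat.ofHom ((C.d i j).hom.restrict
    (fun x hx => d_mem C p f hx) : S C p f i →ₗ[ZMod 2] S C p f j)
  shape i j h := by
    have h0 := C.shape i j h
    apply ModuleCat.hom_ext
    apply LinearMap.ext
    intro x
    apply Subtype.ext
    rw [ModuleCat.hom_ofHom, LinearMap.restrict_coe_apply, h0]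
    rfl
  d_comp_d' i j k _ _ := by
    apply ModuleCat.hom_ext
    apply LinearMap.ext
    intro x
    apply Subtype.ext
    exact d_d_apply C i j k x.1

/-- The correction operator. -/
noncomputable def corr (C : ChainComplex (ModuleCat (ZMod 2)) ℤ) (p : ℤ)
    (f : C.X p →ₗ[ZMod 2] ZMod 2) (v : C.X (p + 1)) (i : ℤ) :
    C.X i →ₗ[ZMod 2] C.X i :=
  if h : p = i then (by subst h; exact f.smulRight ((C.d (p + 1) p) v))
  else if h' : p + 1 = i then
    (by subst h'; exact (f ∘ₗ (C.d (p + 1) p).hom).smulRight v)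
  else 0

lemma corr_p (C : ChainComplex (ModuleCat (ZMod 2)) ℤ) (p : ℤ)
    (f : C.X p →ₗ[ZMod 2] ZMod 2) (v : C.X (p + 1)) :
    corr C p f v p = f.smulRight ((C.d (p + 1) p) v) := by
  rw [corr, dif_pos rfl]

lemma corr_p1 (C : ChainComplex (ModuleCat (ZMod 2)) ℤ) (p : ℤ)
    (f : C.X p →ₗ[ZMod 2] ZMod 2) (v : C.X (p + 1)) :
    corr C p f v (p + 1)
    = (f ∘ₗ (C.d (p + 1) p).hom).smulRight v := by
  rw [corr, dif_neg (by omega), dif_pos rfl]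

lemma corr_other (C : ChainComplex (ModuleCat (ZMod 2)) ℤ) (p : ℤ)
    (f : C.X p →ₗ[ZMod 2] ZMod 2) (v : C.X (p + 1)) {i : ℤ}
    (h1 : p ≠ i) (h2 : p + 1 ≠ i) : corr C p f v i = 0 := by
  rw [corr, dif_neg h1, dif_neg h2]

lemma corr_mem_ker (C : ChainComplex (ModuleCat (ZMod 2)) ℤ) (p : ℤ)
    (f : C.X p →ₗ[ZMod 2] ZMod 2) (v : C.X (p + 1))
    (hfv : f ((C.d (p + 1) p) v) = 1) (i : ℤ) (x : C.X i) :
    x - corr C p f v i x ∈ S C p f i := by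
  unfold S
  rw [LinearMap.mem_ker, map_sub]
  by_cases h : p = i
  · subst h
    rw [g_p, corr_p]
    simp [LinearMap.smulRight_apply, hfv]
  · by_cases h' : p + 1 = i
    · subst h'
      rw [g_p1, corr_p1]
      simp [LinearMap.smulRight_apply, LinearMap.comp_apply, hfv]
    · rw [g_other C p f h h', corr_other C p f v h h']
      simp

lemma corr_eq_zero (C : ChainComplex (ModuleCat (ZMod 2)) ℤ) (p : ℤ)
    (f : C.X p →ₗ[ZMod 2] ZMod 2) (v : C.X (p + 1)) {i : ℤ} {x : C.X i}
    (hx : x ∈ S C p f i) : corr C p f v i x = 0 := by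
  unfold S at hx
  rw [LinearMap.mem_ker] at hx
  by_cases h : p = i
  · subst h
    rw [g_p] at hx
    rw [corr_p]
    simp [LinearMap.smulRight_apply, hx]
  · by_cases h' : p + 1 = i
    · subst h'
      rw [g_p1] at hx
      rw [corr_p1]
      simp only [LinearMap.smulRight_apply]
      rw [hx, zero_smul]
    · rw [corr_other C p f v h h']
      rfl

lemma d_corr (C : ChainComplex (ModuleCat (ZMod 2)) ℤ) (p : ℤ)
    (f : C.X p →ₗ[ZMod 2] ZMod 2) (v : C.X (p + 1)) (i j : ℤ) (x : C.X i) :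
    corr C p f v j ((C.d i j) x) = (C.d i j) (corr C p f v i x) := by
  by_cases hj : p = j
  · subst hj
    rw [corr_p]
    by_cases hi : p + 1 = i
    · subst hi
      rw [corr_p1]
      simp only [LinearMap.smulRight_apply, LinearMap.comp_apply, map_smul]
    · rw [C.shape i p (show ¬ (p + 1 = i) from fun h => hi h)]
      simp only [zero_hom_apply, LinearMap.zero_apply, LinearMap.smulRight_apply,
        map_zero, zero_smul]
  · by_cases hj' : p + 1 = j
    · subst hj'
      rw [corr_p1]
      have hL : ((f ∘ₗ (C.d (p + 1) p).hom).smulRight v)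
          ((C.d i (p + 1)) x) = 0 := by
        rw [LinearMap.smulRight_apply, LinearMap.comp_apply, d_d_apply, map_zero, zero_smul]
      rw [hL]
      by_cases hi : p = i
      · subst hi
        rw [corr_p, LinearMap.smulRight_apply, map_smul, d_d_apply, smul_zero]
      · by_cases hi' : p + 1 = i
        · subst hi'
          rw [C.shape (p + 1) (p + 1) (show ¬ (p + 1 + 1 = p + 1) from fun h => by omega)]
          simp only [zero_hom_apply]
        · rw [corr_other C p f v hi hi']
          simp only [LinearMap.zero_apply, map_zero]
    · rw [corr_other C p f v hj hj']
      by_cases hi : p = i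
      · subst hi
        rw [corr_p]
        simp only [LinearMap.zero_apply, LinearMap.smulRight_apply, map_smul, d_d_apply,
          smul_zero]
      · by_cases hi' : p + 1 = i
        · subst hi'
          rw [corr_p1, C.shape (p + 1) j (show ¬ (j + 1 = p + 1) from fun h => hj' (by omega))]
          simp only [LinearMap.zero_apply, zero_hom_apply, map_zero]
        · rw [corr_other C p f v hi hi']
          simp only [LinearMap.zero_apply, map_zero]

/-- The projection onto the subcomplex. -/
noncomputable def proj (C : ChainComplex (ModuleCat (ZMod 2)) ℤ) (p : ℤ)
    (f : C.X p →ₗ[ZMod 2] ZMod 2) (v : C.X (p + 1))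
    (hfv : f ((C.d (p + 1) p) v) = 1) (i : ℤ) :
    C.X i →ₗ[ZMod 2] S C p f i :=
  LinearMap.codRestrict (S C p f i) (LinearMap.id - corr C p f v i)
    (fun x => corr_mem_ker C p f v hfv i x)

/-- The chain map from C to C'. -/
noncomputable def F (C : ChainComplex (ModuleCat (ZMod 2)) ℤ) (p : ℤ)
    (f : C.X p →ₗ[ZMod 2] ZMod 2) (v : C.X (p + 1))
    (hfv : f ((C.d (p + 1) p) v) = 1) : C ⟶ C' C p f where
  f i := ModuleCat.ofHom (proj C p f v hfv i : C.X i →ₗ[ZMod 2] S C p f i)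
  comm' i j _ := by
    apply ModuleCat.hom_ext
    apply LinearMap.ext
    intro x
    apply Subtype.ext
    show ((C.d i j) (x - corr C p f v i x) : C.X j)
      = (C.d i j) x - corr C p f v j ((C.d i j) x)
    rw [map_sub, d_corr]

/-- The inclusion of C' into C. -/
noncomputable def G (C : ChainComplex (ModuleCat (ZMod 2)) ℤ) (p : ℤ)
    (f : C.X p →ₗ[ZMod 2] ZMod 2) : C' C p f ⟶ C where
  f i := ModuleCat.ofHom ((S C p f i).subtype : S C p f i →ₗ[ZMod 2] C.X i)
  comm' i j _ := rfl

/-- The homotopy operator. -/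
noncomputable def hty (C : ChainComplex (ModuleCat (ZMod 2)) ℤ) (p : ℤ)
    (f : C.X p →ₗ[ZMod 2] ZMod 2) (v : C.X (p + 1)) (i j : ℤ) : C.X i ⟶ C.X j :=
  if h : p = i ∧ p + 1 = j then
    (by obtain ⟨h1, h2⟩ := h; subst h1; subst h2; exact ModuleCat.ofHom (f.smulRight v))
  else 0

lemma hty_pp1 (C : ChainComplex (ModuleCat (ZMod 2)) ℤ) (p : ℤ)
    (f : C.X p →ₗ[ZMod 2] ZMod 2) (v : C.X (p + 1)) :
    hty C p f v p (p + 1) = ModuleCat.ofHom (f.smulRight v : C.X p →ₗ[ZMod 2] C.X (p + 1)) := by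
  rw [hty, dif_pos ⟨rfl, rfl⟩]

lemma hty_zero_left (C : ChainComplex (ModuleCat (ZMod 2)) ℤ) (p : ℤ)
    (f : C.X p →ₗ[ZMod 2] ZMod 2) (v : C.X (p + 1)) {i j : ℤ} (h : p + 1 ≠ j) :
    hty C p f v i j = 0 := by
  rw [hty, dif_neg (by tauto)]

lemma hty_zero_right (C : ChainComplex (ModuleCat (ZMod 2)) ℤ) (p : ℤ)
    (f : C.X p →ₗ[ZMod 2] ZMod 2) (v : C.X (p + 1)) {i j : ℤ} (h : p ≠ i) :
    hty C p f v i j = 0 := by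
  rw [hty, dif_neg (by tauto)]

lemma FG_apply (C : ChainComplex (ModuleCat (ZMod 2)) ℤ) (p : ℤ)
    (f : C.X p →ₗ[ZMod 2] ZMod 2) (v : C.X (p + 1))
    (hfv : f ((C.d (p + 1) p) v) = 1) (i : ℤ) (x : C.X i) :
    (F C p f v hfv ≫ G C p f).f i x = x - corr C p f v i x := rfl

/-- The homotopy between the identity and the composite F ≫ G. -/
noncomputable def idHtpy (C : ChainComplex (ModuleCat (ZMod 2)) ℤ) (p : ℤ)
    (f : C.X p →ₗ[ZMod 2] ZMod 2) (v : C.X (p + 1))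
    (hfv : f ((C.d (p + 1) p) v) = 1) :
    Homotopy (𝟙 C) (F C p f v hfv ≫ G C p f) where
  hom i j := hty C p f v i j
  zero i j h := by
    by_cases hj : p + 1 = j
    · subst hj
      by_cases hi : p = i
      · subst hi
        exact absurd rfl h
      · exact hty_zero_right C p f v hi
    · exact hty_zero_left C p f v hj
  comm i := by
    by_cases hi : p = i
    · subst hi
      rw [prevD_eq (hty C p f v) (show (ComplexShape.down ℤ).Rel (p+1) p from rfl),
        dNext_eq (hty C p f v) (show (ComplexShape.down ℤ).Rel p (p-1) by show p - 1 + 1 = p; omega),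
        hty_zero_left C p f v (show p + 1 ≠ p by omega), Limits.comp_zero, hty_pp1]
      apply ModuleCat.hom_ext
      apply LinearMap.ext
      intro x
      show x = (0 : C.X p →ₗ[ZMod 2] C.X p) x
        + (C.d (p+1) p) (f x • v) + (x - corr C p f v p x)
      rw [corr_p]
      simp only [LinearMap.zero_apply, map_smul, LinearMap.smulRight_apply]
      abel
    · by_cases hi' : p + 1 = i
      · subst hi'
        rw [dNext_eq (hty C p f v) (show (ComplexShape.down ℤ).Rel (p+1) p from rfl),
          prevD_eq (hty C p f v) (show (ComplexShape.down ℤ).Rel (p+1+1) (p+1) from rfl),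
          hty_zero_right C p f v (show p ≠ p + 1 by omega), Limits.zero_comp, hty_pp1]
        apply ModuleCat.hom_ext
        apply LinearMap.ext
        intro x
        show x = f ((C.d (p+1) p) x) • v + (0 : C.X (p+1) →ₗ[ZMod 2] C.X (p+1)) x
          + (x - corr C p f v (p+1) x)
        rw [corr_p1]
        simp only [LinearMap.zero_apply, LinearMap.smulRight_apply, LinearMap.comp_apply]
        abel
      · rw [dNext_eq (hty C p f v) (show (ComplexShape.down ℤ).Rel i (i-1) by show i - 1 + 1 = i; omega),
          prevD_eq (hty C p f v) (show (ComplexShape.down ℤ).Rel (i+1) i from rfl),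
          hty_zero_left C p f v hi', hty_zero_right C p f v hi, Limits.comp_zero, Limits.zero_comp]
        apply ModuleCat.hom_ext
        apply LinearMap.ext
        intro x
        show x = (0 : C.X i →ₗ[ZMod 2] C.X i) x + (0 : C.X i →ₗ[ZMod 2] C.X i) x
          + (x - corr C p f v i x)
        rw [corr_other C p f v hi hi']
        simp

end SingleMorse

theorem single_morse_matching
    (C : ChainComplex (ModuleCat (ZMod 2)) ℤ)
    (hfin : ∀ i : ℤ, FiniteDimensional (ZMod 2) (C.X i))
    (hbdd : ∃ N : ℤ, ∀ i : ℤ, N < |i| → Subsingleton (C.X i))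
    (p : ℤ) (hd : C.d (p + 1) p ≠ 0) :
    ∃ C' : ChainComplex (ModuleCat (ZMod 2)) ℤ,
      (∀ i : ℤ, FiniteDimensional (ZMod 2) (C'.X i)) ∧
      (∃ N : ℤ, ∀ i : ℤ, N < |i| → Subsingleton (C'.X i)) ∧
      Nonempty (HomotopyEquiv C C') ∧
      Module.finrank (ZMod 2) (C'.X (p + 1)) = Module.finrank (ZMod 2) (C.X (p + 1)) - 1 ∧
      Module.finrank (ZMod 2) (C'.X p) = Module.finrank (ZMod 2) (C.X p) - 1 ∧
      ∀ i : ℤ, i ≠ p → i ≠ p + 1 → Nonempty (C'.X i ≅ C.X i) := by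
  classical
  obtain ⟨N, hN⟩ := hbdd
  obtain ⟨v, hv⟩ : ∃ v : C.X (p + 1), (C.d (p + 1) p) v ≠ 0 := by
    by_contra h
    push_neg at h
    exact hd (by apply ModuleCat.hom_ext; apply LinearMap.ext; intro x; simpa using h x)
  haveI := hfin p
  obtain ⟨φ, hφ⟩ : ∃ φ : Module.Dual (ZMod 2) (C.X p), φ ((C.d (p + 1) p) v) ≠ 0 := by
    by_contra h
    push_neg at h
    exact hv ((Module.forall_dual_apply_eq_zero_iff (ZMod 2) _).mp h)
  have hfv : φ ((C.d (p + 1) p) v) = 1 := by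
    have h2 : ∀ a : ZMod 2, a ≠ 0 → a = 1 := by decide
    exact h2 _ hφ
  refine ⟨SingleMorse.C' C p φ, ?_, ⟨N, ?_⟩,
    ⟨⟨SingleMorse.F C p φ v hfv, SingleMorse.G C p φ,
      (SingleMorse.idHtpy C p φ v hfv).symm, Homotopy.ofEq ?_⟩⟩, ?_, ?_, ?_⟩
  · intro i
    haveI := hfin i
    show FiniteDimensional (ZMod 2) (SingleMorse.S C p φ i)
    infer_instance
  · intro i hi
    haveI := hN i hi
    show Subsingleton (SingleMorse.S C p φ i)
    exact ⟨fun a b => Subtype.ext (Subsingleton.elim _ _)⟩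
  · -- G ≫ F = 𝟙 C'
    ext i x
    apply Subtype.ext
    show x.1 - SingleMorse.corr C p φ v i x.1 = x.1
    rw [SingleMorse.corr_eq_zero C p φ v x.2, sub_zero]
  · -- rank at p+1
    haveI := hfin (p + 1)
    show Module.finrank (ZMod 2) (SingleMorse.S C p φ (p + 1)) = _
    unfold SingleMorse.S
    rw [SingleMorse.g_p1]
    set ψ := φ ∘ₗ (C.d (p + 1) p).hom with hψ
    have hsurj : Function.Surjective ψ := by
      intro c
      refine ⟨c • v, ?_⟩
      rw [hψ]
      simp [LinearMap.comp_apply, map_smul, hfv]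
    have h := LinearMap.finrank_range_add_finrank_ker ψ
    rw [LinearMap.range_eq_top.mpr hsurj, finrank_top, Module.finrank_self] at h
    omega
  · -- rank at p
    haveI := hfin p
    show Module.finrank (ZMod 2) (SingleMorse.S C p φ p) = _
    unfold SingleMorse.S
    rw [SingleMorse.g_p]
    have hsurj : Function.Surjective φ := by
      intro c
      exact ⟨c • ((C.d (p + 1) p) v), by simp [map_smul, hfv]⟩
    have h := LinearMap.finrank_range_add_finrank_ker φ
    rw [LinearMap.range_eq_top.mpr hsurj, finrank_top, Module.finrank_self] at h
    omega
  · intro i h1 h2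
    have hS : SingleMorse.S C p φ i = ⊤ := by
      unfold SingleMorse.S
      rw [SingleMorse.g_other C p φ (Ne.symm h1) (fun h => h2 h.symm)]
      exact LinearMap.ker_zero
    exact ⟨(LinearEquiv.ofEq _ _ hS ≪≫ₗ Submodule.topEquiv).toModuleIso⟩
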